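/- In the constrained two-environment linear regression game C-LRG with bound W > 0, suppose the least squares optimal solutions satisfy w₁*, w₂* ∈ 𝒲. If (w₁†, w₂†) is a pure Nash equilibrium of C-LRG with ‖w₁†‖∞ < W, then the ensemble predictor is optimal for environment 1, i.e. w₁† + w₂† = w₁*. Symmetrically, if ‖w₂†‖∞ < W then w₁† + w₂† = w₂*. -/

import Mathlib

open Matrix

/-- Risk of an environment with second-moment matrix `S` and cross-moment vector `ρ`
at the joint action `(w₁, w₂)`:  `(w₁+w₂)ᵀ S (w₁+w₂) − 2 ρᵀ (w₁+w₂)`. -/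
noncomputable def risk {n : ℕ} (S : Matrix (Fin n) (Fin n) ℝ) (ρ : Fin n → ℝ)
    (w₁ w₂ : Fin n → ℝ) : ℝ :=
  (w₁ + w₂) ⬝ᵥ (S *ᵥ (w₁ + w₂)) - 2 * (ρ ⬝ᵥ (w₁ + w₂))

/-- Auxiliary lemma: an interior minimizer (in the first coordinate) of the quadratic
risk forces the gradient `S (a + b) − ρ` to vanish, hence `a + b = S⁻¹ ρ`. -/
lemma key {n : ℕ} (S : Matrix (Fin n) (Fin n) ℝ) (hS : S.PosDef) (ρ : Fin n → ℝ)
    (a b : Fin n → ℝ) (W : ℝ) (ha : ‖a‖ < W)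
    (hN : ∀ u : Fin n → ℝ, ‖u‖ ≤ W → risk S ρ a b ≤ risk S ρ u b) :
    a + b = S⁻¹ *ᵥ ρ := by
  set x := a + b with hx
  obtain ⟨g, hg⟩ : ∃ g, g = S *ᵥ x - ρ := ⟨_, rfl⟩
  have hsym : ∀ u v : Fin n → ℝ, u ⬝ᵥ (S *ᵥ v) = v ⬝ᵥ (S *ᵥ u) := by
    intro u v
    rw [dotProduct_mulVec, dotProduct_comm, ← mulVec_transpose,
      ← conjTranspose_eq_transpose_of_trivial, hS.isHermitian.eq]
  have hggx : g ⬝ᵥ (S *ᵥ x) - g ⬝ᵥ ρ = g ⬝ᵥ g := by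
    rw [hg, dotProduct_sub]
  have hg0 : g = 0 := by
    by_contra hne
    have hgg : 0 < g ⬝ᵥ g := by
      rcases lt_or_eq_of_le (Finset.sum_nonneg fun i _ => mul_self_nonneg (g i) :
          (0:ℝ) ≤ g ⬝ᵥ g) with h | h
      · exact h
      · exact absurd (dotProduct_self_eq_zero.mp h.symm) hne
    have hgSg : 0 < g ⬝ᵥ (S *ᵥ g) := by
      have := hS.dotProduct_mulVec_pos hne
      simpa using this
    set t : ℝ := min ((W - ‖a‖) / ‖g‖) ((g ⬝ᵥ g) / (g ⬝ᵥ (S *ᵥ g))) with ht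
    have hgnorm : 0 < ‖g‖ := norm_pos_iff.mpr hne
    have ht0 : 0 < t := lt_min (div_pos (sub_pos.mpr ha) hgnorm) (div_pos hgg hgSg)
    have hbound : ‖a + t • (-g)‖ ≤ W := by
      calc ‖a + t • (-g)‖ ≤ ‖a‖ + ‖t • (-g)‖ := norm_add_le _ _
        _ = ‖a‖ + t * ‖g‖ := by rw [norm_smul, norm_neg, Real.norm_of_nonneg ht0.le]
        _ ≤ ‖a‖ + ((W - ‖a‖) / ‖g‖) * ‖g‖ := by
            have := min_le_left ((W - ‖a‖) / ‖g‖) ((g ⬝ᵥ g) / (g ⬝ᵥ (S *ᵥ g)))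
            nlinarith
        _ = W := by field_simp; ring
    have hineq := hN (a + t • (-g)) hbound
    have hexp : risk S ρ (a + t • (-g)) b - risk S ρ a b
        = t^2 * (g ⬝ᵥ (S *ᵥ g)) - 2 * t * (g ⬝ᵥ g) := by
      have h1 : a + t • (-g) + b = x + (-t) • g := by
        rw [hx]; module
      simp only [risk, h1, ← hx, mulVec_add, mulVec_smul, dotProduct_add,
        add_dotProduct, dotProduct_smul, smul_dotProduct, smul_eq_mul]
      linear_combination (-t) * hsym x g - 2*t*hggx + 2*t*(dotProduct_comm ρ g)
    have htle : t * (g ⬝ᵥ (S *ᵥ g)) ≤ g ⬝ᵥ g :=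
      (le_div_iff₀ hgSg).mp (min_le_right _ _)
    nlinarith
  have hSx : S *ᵥ x = ρ := by rw [hg] at hg0; exact sub_eq_zero.mp hg0
  have hdet : IsUnit S.det := isUnit_iff_ne_zero.mpr hS.det_pos.ne'
  calc x = (S⁻¹ * S) *ᵥ x := by rw [nonsing_inv_mul S hdet, one_mulVec]
    _ = S⁻¹ *ᵥ (S *ᵥ x) := by rw [← mulVec_mulVec]
    _ = S⁻¹ *ᵥ ρ := by rw [hSx]

/-- In the constrained game C-LRG with bound `W > 0` and
`w₁*, w₂* ∈ 𝒲`: if `(w₁†, w₂†)` is a pure Nash equilibrium with `‖w₁†‖∞ < W`, then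
`w₁† + w₂† = w₁*`; symmetrically, if `‖w₂†‖∞ < W` then `w₁† + w₂† = w₂*`. -/
theorem clrg_nash_interior_implies_optimal {n : ℕ}
    (S₁ S₂ : Matrix (Fin n) (Fin n) ℝ) (hS₁ : S₁.PosDef) (hS₂ : S₂.PosDef)
    (ρ₁ ρ₂ : Fin n → ℝ) (W : ℝ) (hW : 0 < W)
    (hls₁ : ‖S₁⁻¹ *ᵥ ρ₁‖ ≤ W) (hls₂ : ‖S₂⁻¹ *ᵥ ρ₂‖ ≤ W)
    (w₁ w₂ : Fin n → ℝ) (hw₁ : ‖w₁‖ ≤ W) (hw₂ : ‖w₂‖ ≤ W)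
    (hN₁ : ∀ u : Fin n → ℝ, ‖u‖ ≤ W → risk S₁ ρ₁ w₁ w₂ ≤ risk S₁ ρ₁ u w₂)
    (hN₂ : ∀ v : Fin n → ℝ, ‖v‖ ≤ W → risk S₂ ρ₂ w₁ w₂ ≤ risk S₂ ρ₂ w₁ v) :
    (‖w₁‖ < W → w₁ + w₂ = S₁⁻¹ *ᵥ ρ₁) ∧ (‖w₂‖ < W → w₁ + w₂ = S₂⁻¹ *ᵥ ρ₂) := by
  constructor
  · intro h; exact key S₁ hS₁ ρ₁ w₁ w₂ W h hN₁
  · intro h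
    have hcomm : ∀ u v : Fin n → ℝ, risk S₂ ρ₂ u v = risk S₂ ρ₂ v u := by
      intro u v; simp [risk, add_comm]
    have := key S₂ hS₂ ρ₂ w₂ w₁ W h (fun v hv => by
      rw [hcomm w₂ w₁, hcomm v w₁]; exact hN₂ v hv)
    rw [add_comm]; exact this
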